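/- Let G be a locally finite simple graph on a vertex set V in which every vertex has positive degree, let 𝓛 be its normalized Laplacian, and let v ∈ V. For the Dirac function δ_v (equal to 1 at v and 0 elsewhere) one has ∑_{u∈V} |(𝓛δ_v)(u)|² = 1 + (1/d(v))·∑_{w adjacent to v} 1/d(w). Consequently ‖δ_v‖ = Λ(v)·‖𝓛δ_v‖, where Λ(v) = (1 + (1/d(v))·∑_{w adjacent to v} 1/d(w))^{−1/2}; in particular the single vertex set {v} is a Λ(v)-set. -/
import Mathlib

noncomputable def nLap {V : Type*} (G : SimpleGraph V) [G.LocallyFinite] (f : V → ℂ) (v : V) : ℂ :=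
  f v - ∑ u ∈ G.neighborFinset v, f u / (Real.sqrt ((G.degree u : ℝ) * (G.degree v : ℝ)) : ℂ)

section Aux
variable {V : Type*} [DecidableEq V] (G : SimpleGraph V) [G.LocallyFinite]

set_option linter.unusedSectionVars false in
lemma nLap_smul (c : ℂ) (f : V → ℂ) (u : V) :
    nLap G (fun w => c * f w) u = c * nLap G f u := by
  simp [nLap, Finset.mul_sum, mul_div_assoc, mul_sub]

lemma nLap_dirac (v u : V) :
    nLap G (fun w => if w = v then (1 : ℂ) else 0) u =
      if u = v then 1 else if u ∈ G.neighborFinset v then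
        -(1 / (Real.sqrt ((G.degree v : ℝ) * (G.degree u : ℝ)) : ℂ)) else 0 := by
  unfold nLap
  have hsum : ∑ w ∈ G.neighborFinset u, (if w = v then (1:ℂ) else 0) /
      (Real.sqrt ((G.degree w : ℝ) * (G.degree u : ℝ)) : ℂ)
      = if v ∈ G.neighborFinset u then
          (1:ℂ) / (Real.sqrt ((G.degree v : ℝ) * (G.degree u : ℝ)) : ℂ) else 0 := by
    rw [← Finset.sum_ite_eq' (G.neighborFinset u) v
      (fun w => (1:ℂ) / (Real.sqrt ((G.degree w : ℝ) * (G.degree u : ℝ)) : ℂ))]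
    apply Finset.sum_congr rfl
    intro w _
    split_ifs with h <;> simp [h]
  rw [hsum]
  by_cases huv : u = v
  · subst huv
    simp [SimpleGraph.mem_neighborFinset, G.irrefl]
  · have hmem : v ∈ G.neighborFinset u ↔ u ∈ G.neighborFinset v := by
      simp [SimpleGraph.mem_neighborFinset, SimpleGraph.adj_comm]
    simp only [huv, if_false, hmem]
    split_ifs <;> simp

lemma normsq_nLap_dirac (hdeg : ∀ v : V, 0 < G.degree v) (v u : V) :
    ‖nLap G (fun w => if w = v then (1 : ℂ) else 0) u‖ ^ 2 =
      if u = v then 1 else if u ∈ G.neighborFinset v then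
        ((G.degree v : ℝ) * (G.degree u : ℝ))⁻¹ else 0 := by
  rw [nLap_dirac]
  split_ifs with h1 h2
  · simp
  · have hx : (0:ℝ) < (G.degree v : ℝ) * (G.degree u : ℝ) := by
      have hv' : (0:ℝ) < (G.degree v : ℝ) := by exact_mod_cast hdeg v
      have hu' : (0:ℝ) < (G.degree u : ℝ) := by exact_mod_cast hdeg u
      exact mul_pos hv' hu'
    rw [norm_neg, norm_div, norm_one, Complex.norm_real, Real.norm_eq_abs,
      abs_of_nonneg (Real.sqrt_nonneg _), div_pow, one_pow, Real.sq_sqrt hx.le, one_div]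
  · simp

end Aux

theorem dirac_lambda_set {V : Type*} [DecidableEq V] (G : SimpleGraph V) [G.LocallyFinite]
    (hdeg : ∀ v : V, 0 < G.degree v) (v : V) :
    (∑' u : V, ‖nLap G (fun w => if w = v then (1 : ℂ) else 0) u‖ ^ 2) =
        1 + (1 / (G.degree v : ℝ)) * ∑ w ∈ G.neighborFinset v, 1 / (G.degree w : ℝ) ∧
    Real.sqrt (∑' u : V, ‖(fun w => if w = v then (1 : ℂ) else 0) u‖ ^ 2) =
        (1 + (1 / (G.degree v : ℝ)) * ∑ w ∈ G.neighborFinset v, 1 / (G.degree w : ℝ))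
            ^ (-(1 / 2 : ℝ)) *
          Real.sqrt (∑' u : V, ‖nLap G (fun w => if w = v then (1 : ℂ) else 0) u‖ ^ 2) ∧
    (∀ φ : V → ℂ, (∀ w, w ∉ ({v} : Set V) → φ w = 0) →
      Summable (fun u => ‖φ u‖ ^ 2) → Summable (fun u => ‖nLap G φ u‖ ^ 2) →
      Real.sqrt (∑' u : V, ‖φ u‖ ^ 2) ≤
        (1 + (1 / (G.degree v : ℝ)) * ∑ w ∈ G.neighborFinset v, 1 / (G.degree w : ℝ))
            ^ (-(1 / 2 : ℝ)) *
          Real.sqrt (∑' u : V, ‖nLap G φ u‖ ^ 2)) := by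
  set S : ℝ := 1 + (1 / (G.degree v : ℝ)) * ∑ w ∈ G.neighborFinset v, 1 / (G.degree w : ℝ) with hSdef
  have hSpos : 0 < S := by
    have : 0 ≤ (1 / (G.degree v : ℝ)) * ∑ w ∈ G.neighborFinset v, 1 / (G.degree w : ℝ) := by
      positivity
    rw [hSdef]; linarith
  -- first part
  have hvnot : v ∉ G.neighborFinset v := by
    simp [SimpleGraph.mem_neighborFinset]
  have h1 : (∑' u : V, ‖nLap G (fun w => if w = v then (1 : ℂ) else 0) u‖ ^ 2) = S := by
    have hzero : ∀ u ∉ insert v (G.neighborFinset v),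
        ‖nLap G (fun w => if w = v then (1 : ℂ) else 0) u‖ ^ 2 = 0 := by
      intro u hu
      simp only [Finset.mem_insert, not_or] at hu
      rw [normsq_nLap_dirac G hdeg]
      simp [hu.1, hu.2]
    rw [tsum_eq_sum hzero, Finset.sum_insert hvnot]
    have hv1 : ‖nLap G (fun w => if w = v then (1 : ℂ) else 0) v‖ ^ 2 = 1 := by
      rw [normsq_nLap_dirac G hdeg]; simp
    rw [hv1]
    have hrest : ∑ u ∈ G.neighborFinset v, ‖nLap G (fun w => if w = v then (1 : ℂ) else 0) u‖ ^ 2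
        = (1 / (G.degree v : ℝ)) * ∑ w ∈ G.neighborFinset v, 1 / (G.degree w : ℝ) := by
      rw [Finset.mul_sum]
      apply Finset.sum_congr rfl
      intro u hu
      have hne : u ≠ v := by
        intro h; subst h; exact hvnot hu
      rw [normsq_nLap_dirac G hdeg]
      simp only [hne, if_false, hu, if_true]
      rw [mul_inv]
      ring
    rw [hrest]
  have hdelta : (∑' u : V, ‖(fun w => if w = v then (1 : ℂ) else 0) u‖ ^ 2) = 1 := by
    have : ∀ u : V, ‖(fun w => if w = v then (1 : ℂ) else 0) u‖ ^ 2
        = if u = v then (1:ℝ) else 0 := by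
      intro u; by_cases h : u = v <;> simp [h]
    rw [tsum_congr this, tsum_ite_eq]
  have hScancel : S ^ (-(1 / 2 : ℝ)) * Real.sqrt S = 1 := by
    rw [Real.sqrt_eq_rpow, ← Real.rpow_add hSpos]
    norm_num
  refine ⟨h1, ?_, ?_⟩
  · rw [hdelta, h1, hScancel, Real.sqrt_one]
  · intro φ hsupp _ _
    have hφ : φ = fun u => φ v * (if u = v then (1:ℂ) else 0) := by
      funext u
      by_cases h : u = v
      · simp [h]
      · simp [h, hsupp u (by simp [h])]
    rw [hφ]
    have e1 : (∑' u : V, ‖(fun u => φ v * (if u = v then (1:ℂ) else 0)) u‖ ^ 2)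
        = ‖φ v‖ ^ 2 := by
      have : ∀ u : V, ‖φ v * (if u = v then (1:ℂ) else 0)‖ ^ 2
          = ‖φ v‖ ^ 2 * ‖(fun w => if w = v then (1:ℂ) else 0) u‖ ^ 2 := by
        intro u; rw [norm_mul, mul_pow]
      rw [tsum_congr this, tsum_mul_left, hdelta, mul_one]
    have e2 : (∑' u : V, ‖nLap G (fun u => φ v * (if u = v then (1:ℂ) else 0)) u‖ ^ 2)
        = ‖φ v‖ ^ 2 * S := by
      have : ∀ u : V, ‖nLap G (fun u => φ v * (if u = v then (1:ℂ) else 0)) u‖ ^ 2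
          = ‖φ v‖ ^ 2 * ‖nLap G (fun w => if w = v then (1:ℂ) else 0) u‖ ^ 2 := by
        intro u; rw [nLap_smul, norm_mul, mul_pow]
      rw [tsum_congr this, tsum_mul_left, h1]
    rw [e1, e2, Real.sqrt_mul (sq_nonneg _), Real.sqrt_sq (norm_nonneg _),
      ← mul_assoc, mul_comm (S ^ (-(1 / 2 : ℝ))) ‖φ v‖, mul_assoc, hScancel, mul_one]
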